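/- Let E be a finite effect algebra with (pairwise distinct) atoms a_1,…,a_m, and suppose s_1,…,s_m are nonnegative real numbers such that Σ_{t=1}^m y_t s_t = 1 for every (y_1,…,y_m) ∈ Seq(E). Then for every x ∈ E written as x = k_1 a_1 ⊕ … ⊕ k_m a_m (with k_t ∈ ℕ, the orthosum defined), one has 0 ≤ Σ_{t=1}^m k_t s_t ≤ 1. -/

import Mathlib

/-- An effect algebra: a set with 0, 1 and a partially defined binary
operation `⊕`, modeled as an `Option`-valued operation. -/
structure EffectAlgebra (E : Type*) where
  oplus : E → E → Option E
  zero : E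
  one : E
  comm : ∀ p q, oplus p q = oplus q p
  assoc : ∀ p q r s qr, oplus q r = some qr → oplus p qr = some s →
    ∃ pq, oplus p q = some pq ∧ oplus pq r = some s
  orthosupp : ∀ p, ∃! q, oplus p q = some one
  zero_unit : ∀ p q, oplus one p = some q → p = zero

namespace EffectAlgebra

variable {E : Type*}

/-- `p ≤ q` iff there is `r` with `p ⊕ r` defined and equal to `q`. -/
def le (W : EffectAlgebra E) (p q : E) : Prop := ∃ r, W.oplus p r = some q

/-- An atom is a minimal element of `E \ {0}`. -/
def IsAtomElem (W : EffectAlgebra E) (x : E) : Prop :=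
  x ≠ W.zero ∧ ∀ y : E, W.le y x → y ≠ W.zero → y = x

/-- Partial orthosum of a list of elements. -/
def listSum (W : EffectAlgebra E) : List E → Option E
  | [] => some W.zero
  | x :: xs => (listSum W xs).bind (fun y => W.oplus x y)

/-- The orthosum `k 0 • a 0 ⊕ ⋯ ⊕ k (m-1) • a (m-1)`, when defined. -/
def mulSum (W : EffectAlgebra E) {m : ℕ} (a : Fin m → E) (k : Fin m → ℕ) : Option E :=
  W.listSum ((List.ofFn (fun t => List.replicate (k t) (a t))).flatten)

/-- `Seq(E)`: tuples `k` with `⨁ k t • a t` defined and equal to `1`. -/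
def SeqSet (W : EffectAlgebra E) {m : ℕ} (a : Fin m → E) : Set (Fin m → ℕ) :=
  {k | W.mulSum a k = some W.one}

/-- `a : Fin m → E` enumerates the atoms of `E` without repetition. -/
def AtomFamily (W : EffectAlgebra E) {m : ℕ} (a : Fin m → E) : Prop :=
  Function.Injective a ∧ (∀ t, W.IsAtomElem (a t)) ∧
    ∀ x : E, W.IsAtomElem x → ∃ t, x = a t

/-- `A ∈ M(E)`: the rows of `A` are pairwise distinct and enumerate `Seq(E)`. -/
def MemM (W : EffectAlgebra E) {m n : ℕ} (a : Fin m → E) (A : Matrix (Fin n) (Fin m) ℕ) : Prop :=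
  (∀ i j : Fin n, i ≠ j → ∃ t, A i t ≠ A j t) ∧
    {k : Fin m → ℕ | ∃ i, A i = k} = W.SeqSet a

/-- A state on an effect algebra. -/
def IsState (W : EffectAlgebra E) (s : E → ℝ) : Prop :=
  (∀ x, 0 ≤ s x ∧ s x ≤ 1) ∧ s W.one = 1 ∧
    ∀ p q r, W.oplus p q = some r → s p + s q ≤ 1 ∧ s r = s p + s q

end EffectAlgebra

/-- `(A|1)`: the matrix `A` augmented by a column of ones. -/
def augmentOnes {n m : ℕ} {R : Type*} [One R] (A : Matrix (Fin n) (Fin m) R) :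
    Matrix (Fin n) (Fin (m + 1)) R :=
  Matrix.of fun i j => if h : (j : ℕ) < m then A i ⟨j, h⟩ else 1

namespace EffectAlgebra

variable {E : Type*} (W : EffectAlgebra E)

lemma assoc' {p q r s pq : E} (h1 : W.oplus p q = some pq) (h2 : W.oplus pq r = some s) :
    ∃ qr, W.oplus q r = some qr ∧ W.oplus p qr = some s := by
  have h1' : W.oplus q p = some pq := by rw [W.comm]; exact h1
  have h2' : W.oplus r pq = some s := by rw [W.comm]; exact h2
  obtain ⟨rq, hrq, hs⟩ := W.assoc r q p s pq h1' h2'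
  exact ⟨rq, by rw [W.comm]; exact hrq, by rw [W.comm]; exact hs⟩

lemma one_zero : W.oplus W.one W.zero = some W.one := by
  obtain ⟨q, hq, _⟩ := W.orthosupp W.one
  have h := W.zero_unit q W.one hq
  rwa [h] at hq

lemma zero_oplus (p : E) : W.oplus W.zero p = some p := by
  obtain ⟨p', hp', _⟩ := W.orthosupp p
  have h01 : W.oplus W.zero W.one = some W.one := by rw [W.comm]; exact W.one_zero
  obtain ⟨z, hz, hz1⟩ := W.assoc W.zero p p' W.one W.one hp' h01
  obtain ⟨q, _, huniq⟩ := W.orthosupp p'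
  have e1 : z = q := huniq z ((W.comm p' z).trans hz1)
  have e2 : p = q := huniq p ((W.comm p' p).trans hp')
  rw [hz, e1, ← e2]

lemma oplus_zero (p : E) : W.oplus p W.zero = some p := by
  rw [W.comm]; exact W.zero_oplus p

lemma cancel {p q r v : E} (h1 : W.oplus p q = some v) (h2 : W.oplus p r = some v) : q = r := by
  obtain ⟨v', hv', _⟩ := W.orthosupp v
  obtain ⟨pv, hpv, hq1⟩ := W.assoc' (by rw [W.comm]; exact h1) hv'
  obtain ⟨pv2, hpv2, hr1⟩ := W.assoc' (by rw [W.comm]; exact h2) hv'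
  have hpe : pv = pv2 := by rw [hpv] at hpv2; exact (Option.some.inj hpv2)
  have hr1' : W.oplus r pv = some W.one := by rw [hpe]; exact hr1
  obtain ⟨w, _, huniq⟩ := W.orthosupp pv
  have e1 : q = w := huniq q ((W.comm pv q).trans hq1)
  have e2 : r = w := huniq r ((W.comm pv r).trans hr1')
  rw [e1, e2]

lemma eq_zero_of_oplus_eq_zero {p q : E} (h : W.oplus p q = some W.zero) :
    p = W.zero ∧ q = W.zero := by
  have h01 : W.oplus W.zero W.one = some W.one := by rw [W.comm]; exact W.one_zero
  obtain ⟨q1, hq1, hp1⟩ := W.assoc' h h01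
  have hq0 : q = W.zero := W.zero_unit q q1 ((W.comm W.one q).trans hq1)
  subst hq0
  have hq1' : q1 = W.one := by
    rw [W.zero_oplus] at hq1
    exact (Option.some.inj hq1).symm
  subst hq1'
  exact ⟨W.zero_unit p W.one ((W.comm W.one p).trans hp1), rfl⟩

lemma le_refl (p : E) : W.le p p := ⟨W.zero, W.oplus_zero p⟩

lemma le_trans {p q r : E} (h1 : W.le p q) (h2 : W.le q r) : W.le p r := by
  obtain ⟨u, hu⟩ := h1
  obtain ⟨v, hv⟩ := h2
  obtain ⟨uv, _, huv⟩ := W.assoc' hu hv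
  exact ⟨uv, huv⟩

lemma le_antisymm {p q : E} (h1 : W.le p q) (h2 : W.le q p) : p = q := by
  obtain ⟨u, hu⟩ := h1
  obtain ⟨v, hv⟩ := h2
  obtain ⟨uv, huv, hpuv⟩ := W.assoc' hu hv
  have h0 : uv = W.zero := W.cancel hpuv (W.oplus_zero p)
  subst h0
  have hu0 : u = W.zero := (W.eq_zero_of_oplus_eq_zero huv).1
  subst hu0
  rw [W.oplus_zero] at hu
  exact Option.some.inj hu

lemma oplus_assoc_opt (p q r : E) :
    (W.oplus q r).bind (fun qr => W.oplus p qr) = (W.oplus p q).bind (fun pq => W.oplus pq r) := by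
  have h1 : ∀ s, (W.oplus q r).bind (fun qr => W.oplus p qr) = some s →
      (W.oplus p q).bind (fun pq => W.oplus pq r) = some s := by
    intro s hs
    rcases Option.bind_eq_some_iff.mp hs with ⟨qr, hqr, hpqr⟩
    obtain ⟨pq, hpq, h⟩ := W.assoc p q r s qr hqr hpqr
    rw [hpq, Option.bind_some]; exact h
  have h2 : ∀ s, (W.oplus p q).bind (fun pq => W.oplus pq r) = some s →
      (W.oplus q r).bind (fun qr => W.oplus p qr) = some s := by
    intro s hs
    rcases Option.bind_eq_some_iff.mp hs with ⟨pq, hpq, h⟩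
    obtain ⟨qr, hqr, h'⟩ := W.assoc' hpq h
    rw [hqr, Option.bind_some]; exact h'
  match hL : (W.oplus q r).bind (fun qr => W.oplus p qr),
        hR : (W.oplus p q).bind (fun pq => W.oplus pq r) with
  | none, none => rfl
  | some s, _ => rw [← hR, h1 s hL]
  | none, some s => rw [h2 s hR] at hL; cases hL

lemma listSum_perm {l l' : List E} (h : l.Perm l') : W.listSum l = W.listSum l' := by
  induction h with
  | nil => rfl
  | cons x _ ih => simp only [listSum, ih]
  | swap x y l =>
      show ((W.listSum l).bind (fun v => W.oplus x v)).bind (fun v => W.oplus y v)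
        = ((W.listSum l).bind (fun v => W.oplus y v)).bind (fun v => W.oplus x v)
      cases h : W.listSum l with
      | none => rfl
      | some v =>
        simp only [Option.bind_some]
        rw [W.oplus_assoc_opt y x v, W.comm y x, ← W.oplus_assoc_opt x y v]
  | trans _ _ ih1 ih2 => rw [ih1, ih2]

lemma listSum_append (l1 l2 : List E) :
    W.listSum (l1 ++ l2) = (W.listSum l1).bind fun u => (W.listSum l2).bind fun v => W.oplus u v := by
  induction l1 with
  | nil =>
    show W.listSum l2 = (some W.zero).bind fun u => (W.listSum l2).bind fun v => W.oplus u v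
    rw [Option.bind_some]
    cases h : W.listSum l2 with
    | none => rfl
    | some v => rw [Option.bind_some, W.zero_oplus]
  | cons x xs ih =>
    show (W.listSum (xs ++ l2)).bind (fun v => W.oplus x v) = _
    rw [ih]
    show _ = ((W.listSum xs).bind (fun v => W.oplus x v)).bind fun u => (W.listSum l2).bind fun v => W.oplus u v
    cases h1 : W.listSum xs with
    | none => rfl
    | some u =>
      cases h2 : W.listSum l2 with
      | none =>
        simp only [Option.bind_some, Option.bind_none]
        cases W.oplus x u <;> rfl
      | some v =>
        simp only [Option.bind_some]
        rw [W.oplus_assoc_opt x u v]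

lemma perm_append_exchange (A B C D : List E) :
    ((A ++ B) ++ (C ++ D)).Perm ((A ++ C) ++ (B ++ D)) := by
  have h1 : (B ++ (C ++ D)).Perm (C ++ (B ++ D)) := by
    have h := List.Perm.append_right D (List.perm_append_comm (l₁ := B) (l₂ := C))
    rw [List.append_assoc, List.append_assoc] at h
    exact h
  have h2 := List.Perm.append_left A h1
  have e1 : (A ++ B) ++ (C ++ D) = A ++ (B ++ (C ++ D)) := List.append_assoc A B (C ++ D)
  have e2 : (A ++ C) ++ (B ++ D) = A ++ (C ++ (B ++ D)) := List.append_assoc A C (B ++ D)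
  rw [e1, e2]
  exact h2

lemma flatten_ofFn_append {m : ℕ} (f g : Fin m → List E) :
    ((List.ofFn fun t => f t ++ g t).flatten).Perm
      ((List.ofFn f).flatten ++ (List.ofFn g).flatten) := by
  induction m with
  | zero => simp
  | succ n ih =>
    rw [List.ofFn_succ (f := fun t => f t ++ g t), List.ofFn_succ (f := f), List.ofFn_succ (f := g)]
    simp only [List.flatten_cons]
    have H := ih (fun i => f i.succ) (fun i => g i.succ)
    exact (List.Perm.append_left (f 0 ++ g 0) H).trans (perm_append_exchange _ _ _ _)

lemma mulSum_add {m : ℕ} (a : Fin m → E) (k1 k2 : Fin m → ℕ) :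
    W.mulSum a (k1 + k2) =
      (W.mulSum a k1).bind fun u => (W.mulSum a k2).bind fun v => W.oplus u v := by
  unfold mulSum
  have hperm : ((List.ofFn fun t => List.replicate ((k1 + k2) t) (a t)).flatten).Perm
      ((List.ofFn fun t => List.replicate (k1 t) (a t)).flatten ++
       (List.ofFn fun t => List.replicate (k2 t) (a t)).flatten) := by
    have he : (fun t => List.replicate ((k1 + k2) t) (a t)) =
        fun t => List.replicate (k1 t) (a t) ++ List.replicate (k2 t) (a t) := by
      funext t
      rw [Pi.add_apply, List.replicate_add]
    rw [he]
    exact flatten_ofFn_append _ _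
  rw [W.listSum_perm hperm, W.listSum_append]

lemma flatten_ofFn_single {m : ℕ} (g : Fin m → List E) (t : Fin m)
    (h : ∀ u, u ≠ t → g u = []) : (List.ofFn g).flatten = g t := by
  induction m with
  | zero => exact t.elim0
  | succ n ih =>
    rw [List.ofFn_succ, List.flatten_cons]
    rcases Fin.eq_zero_or_eq_succ t with rfl | ⟨t', rfl⟩
    · have hnil : (List.ofFn fun i : Fin n => g i.succ).flatten = [] := by
        rw [List.flatten_eq_nil_iff]
        intro l hl
        rw [List.mem_ofFn] at hl
        obtain ⟨i, rfl⟩ := hl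
        exact h i.succ (Fin.succ_ne_zero i)
      rw [hnil, List.append_nil]
    · rw [h 0 (fun hc => (Fin.succ_ne_zero t') hc.symm), List.nil_append]
      exact ih (fun i => g i.succ) t' (fun u hu => h u.succ (fun hc => hu (Fin.succ_injective n hc)))

lemma mulSum_zero {m : ℕ} (a : Fin m → E) : W.mulSum a 0 = some W.zero := by
  unfold mulSum
  have he : (List.ofFn fun t => List.replicate ((0 : Fin m → ℕ) t) (a t)).flatten = [] := by
    rw [List.flatten_eq_nil_iff]
    intro l hl
    rw [List.mem_ofFn] at hl
    obtain ⟨i, rfl⟩ := hl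
    rfl
  rw [he]
  rfl

lemma mulSum_single {m : ℕ} (a : Fin m → E) (t : Fin m) :
    W.mulSum a (Pi.single t 1) = some (a t) := by
  unfold mulSum
  have h := flatten_ofFn_single (fun u => List.replicate ((Pi.single t 1 : Fin m → ℕ) u) (a u)) t
    (fun u hu => by simp [Pi.single_apply, hu])
  rw [h]
  simp only [Pi.single_eq_same, List.replicate_one]
  show (some W.zero).bind (fun y => W.oplus (a t) y) = some (a t)
  rw [Option.bind_some, W.oplus_zero]

lemma exists_atom_le [Fintype E] (y : E) (hy : y ≠ W.zero) :
    ∃ b, W.IsAtomElem b ∧ W.le b y := by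
  classical
  suffices H : ∀ n (y : E), (Finset.univ.filter (fun z => W.le z y)).card ≤ n → y ≠ W.zero →
      ∃ b, W.IsAtomElem b ∧ W.le b y from H _ y le_rfl hy
  intro n
  induction n with
  | zero =>
    intro y hcard _
    have hmem : y ∈ Finset.univ.filter (fun z => W.le z y) := by
      simp [W.le_refl]
    have := Finset.card_pos.mpr ⟨y, hmem⟩
    omega
  | succ n ih =>
    intro y hcard hy
    by_cases hat : W.IsAtomElem y
    · exact ⟨y, hat, W.le_refl y⟩
    · rw [IsAtomElem] at hat
      push_neg at hat
      obtain ⟨z, hzy, hz0, hzne⟩ := hat hy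
      have hsub : (Finset.univ.filter (fun w => W.le w z)) ⊂ (Finset.univ.filter (fun w => W.le w y)) := by
        constructor
        · intro w hw
          simp only [Finset.mem_filter, Finset.mem_univ, true_and] at hw ⊢
          exact W.le_trans hw hzy
        · intro hcon
          have hyz : y ∈ Finset.univ.filter (fun w => W.le w z) :=
            hcon (by simp [W.le_refl])
          simp only [Finset.mem_filter, Finset.mem_univ, true_and] at hyz
          exact hzne (W.le_antisymm hzy hyz)
      have hlt := Finset.card_lt_card hsub
      obtain ⟨b, hb, hbz⟩ := ih z (by omega) hz0
      exact ⟨b, hb, W.le_trans hbz hzy⟩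

lemma decomp [Fintype E] {m : ℕ} (a : Fin m → E) (ha : W.AtomFamily a) (y : E) :
    ∃ k, W.mulSum a k = some y := by
  classical
  suffices H : ∀ n (y : E), (Finset.univ.filter (fun z => W.le z y)).card ≤ n →
      ∃ k, W.mulSum a k = some y from H _ y le_rfl
  intro n
  induction n with
  | zero =>
    intro y hcard
    have hmem : y ∈ Finset.univ.filter (fun z => W.le z y) := by simp [W.le_refl]
    have := Finset.card_pos.mpr ⟨y, hmem⟩
    omega
  | succ n ih =>
    intro y hcard
    by_cases hy0 : y = W.zero
    · exact ⟨0, by rw [hy0]; exact W.mulSum_zero a⟩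
    · obtain ⟨b, hb, hby⟩ := W.exists_atom_le y hy0
      obtain ⟨t, rfl⟩ := ha.2.2 b hb
      obtain ⟨r, hr⟩ := hby
      have hry : W.le r y := ⟨a t, by rw [W.comm]; exact hr⟩
      have hrne : r ≠ y := by
        intro hre
        subst hre
        have h1 : W.oplus r (a t) = some r := by rw [W.comm]; exact hr
        exact hb.1 (W.cancel h1 (W.oplus_zero r))
      have hsub : (Finset.univ.filter (fun w => W.le w r)) ⊂ (Finset.univ.filter (fun w => W.le w y)) := by
        constructor
        · intro w hw
          simp only [Finset.mem_filter, Finset.mem_univ, true_and] at hw ⊢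
          exact W.le_trans hw hry
        · intro hcon
          have hyr : y ∈ Finset.univ.filter (fun w => W.le w r) := hcon (by simp [W.le_refl])
          simp only [Finset.mem_filter, Finset.mem_univ, true_and] at hyr
          exact hrne (W.le_antisymm hry hyr)
      have hlt := Finset.card_lt_card hsub
      obtain ⟨kr, hkr⟩ := ih r (by omega)
      refine ⟨kr + Pi.single t 1, ?_⟩
      rw [W.mulSum_add, hkr, W.mulSum_single, Option.bind_some, Option.bind_some]
      rw [W.comm]; exact hr

end EffectAlgebra

/-- If `∑ y t * s t = 1` for all `y ∈ Seq(E)`, then for any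
`x = ⨁ k t • a t` one has `0 ≤ ∑ k t * s t ≤ 1`. -/
theorem sum_between_zero_one {E : Type*} [Fintype E] (W : EffectAlgebra E)
    {m : ℕ} (a : Fin m → E) (ha : W.AtomFamily a)
    (s : Fin m → ℝ) (hs : ∀ t, 0 ≤ s t)
    (hsol : ∀ y ∈ W.SeqSet a, ∑ t : Fin m, (y t : ℝ) * s t = 1)
    (x : E) (k : Fin m → ℕ) (hk : W.mulSum a k = some x) :
    0 ≤ ∑ t : Fin m, (k t : ℝ) * s t ∧ ∑ t : Fin m, (k t : ℝ) * s t ≤ 1 := by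
  constructor
  · exact Finset.sum_nonneg fun t _ => mul_nonneg (Nat.cast_nonneg _) (hs t)
  · obtain ⟨y, hy, _⟩ := W.orthosupp x
    obtain ⟨k', hk'⟩ := W.decomp a ha y
    have hmem : (k + k') ∈ W.SeqSet a := by
      show W.mulSum a (k + k') = some W.one
      rw [W.mulSum_add, hk, hk']
      exact hy
    have h1 := hsol _ hmem
    have h2 : (∑ t : Fin m, (k t : ℝ) * s t) + ∑ t : Fin m, (k' t : ℝ) * s t = 1 := by
      rw [← Finset.sum_add_distrib, ← h1]
      apply Finset.sum_congr rfl
      intro t _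
      rw [Pi.add_apply]
      push_cast
      ring
    have h3 : 0 ≤ ∑ t : Fin m, (k' t : ℝ) * s t :=
      Finset.sum_nonneg fun t _ => mul_nonneg (Nat.cast_nonneg _) (hs t)
    linarith
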